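/- Let x ∈ [0,1] be non-dyadic and not in S (the set of local maxima abscissas, characterized by eventually alternating binary digits). Then there exists δ > 0 such that for every n ≥ 0 there exists J ≥ n with |C_{J-1}(x)| > δ·2^{J(1-α)} and moreover either (C_{J-1}(x) > 0 and i_{J+1}(x) = 0) or (C_{J-1}(x) < 0 and i_{J+1}(x) = 1). -/

import Mathlib

open Real

noncomputable def digit (x : ℝ) (j : ℕ) : ℕ := (⌊(2:ℝ) ^ j * x⌋).toNat % 2

noncomputable def knoppSlope (α x : ℝ) (n : ℕ) : ℝ :=
  ∑ j ∈ Finset.range n, (-1:ℝ) ^ (digit x (j+1)) * (2:ℝ) ^ ((1-α) * (j:ℝ))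

def isDyadic (x : ℝ) : Prop := ∃ K N : ℕ, Odd K ∧ x = (K:ℝ) / 2 ^ N

def inS (x : ℝ) : Prop :=
  (∃ k N : ℕ, x = (k:ℝ)/2^N + 1/(3*2^N) ∨ x = (k:ℝ)/2^N + 2/(3*2^N)) ∧ x ∈ Set.Ioo (0:ℝ) 1

lemma digit_lt_two (x : ℝ) (j : ℕ) : digit x j < 2 := Nat.mod_lt _ (by norm_num)

lemma two_pow_succ_mul (x : ℝ) (j : ℕ) :
    (2:ℝ)^(j+1) * x = ((2 * ⌊(2:ℝ)^j * x⌋ : ℤ) : ℝ) + 2 * Int.fract ((2:ℝ)^j * x) := by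
  have h := Int.floor_add_fract ((2:ℝ)^j * x)
  have h2 : (2:ℝ)^(j+1) * x = 2 * ((2:ℝ)^j * x) := by ring
  push_cast
  linarith

lemma digit_succ_int (x : ℝ) (hx0 : 0 ≤ x) (j : ℕ) :
    (digit x (j+1) : ℤ) = ⌊2 * Int.fract ((2:ℝ)^j * x)⌋ := by
  have hxj : (0:ℝ) ≤ (2:ℝ)^j * x := by positivity
  have hm : (0:ℤ) ≤ ⌊(2:ℝ)^j * x⌋ := Int.floor_nonneg.2 hxj
  have hf0 : (0:ℝ) ≤ Int.fract ((2:ℝ)^j * x) := Int.fract_nonneg _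
  have hf1 : Int.fract ((2:ℝ)^j * x) < 1 := Int.fract_lt_one _
  have hb0 : (0:ℤ) ≤ ⌊2 * Int.fract ((2:ℝ)^j * x)⌋ := Int.floor_nonneg.2 (by linarith)
  have hb1 : ⌊2 * Int.fract ((2:ℝ)^j * x)⌋ < 2 := Int.floor_lt.2 (by push_cast; linarith)
  have hfl : ⌊(2:ℝ)^(j+1) * x⌋ = 2 * ⌊(2:ℝ)^j * x⌋ + ⌊2 * Int.fract ((2:ℝ)^j * x)⌋ := by
    rw [two_pow_succ_mul, Int.floor_intCast_add]
  unfold digit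
  rw [hfl]
  omega

lemma fract_succ (x : ℝ) (hx0 : 0 ≤ x) (j : ℕ) :
    Int.fract ((2:ℝ)^(j+1) * x) = 2 * Int.fract ((2:ℝ)^j * x) - (digit x (j+1) : ℝ) := by
  rw [two_pow_succ_mul, Int.fract_intCast_add, Int.fract]
  have := digit_succ_int x hx0 j
  have h2 : ((digit x (j+1) : ℤ) : ℝ) = ((⌊2 * Int.fract ((2:ℝ)^j * x)⌋ : ℤ) : ℝ) := by rw [this]
  push_cast at h2 ⊢
  linarith

lemma neg_one_pow_ne {a b : ℕ} (ha : a < 2) (hb : b < 2) (h : a ≠ b) :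
    (-1:ℝ)^b = -(-1:ℝ)^a := by
  interval_cases a <;> interval_cases b <;> simp_all

set_option maxHeartbeats 2000000 in
theorem slope_sign_bounds (α : ℝ) (hα : 0 < α) (hα1 : α < 1)
    (x : ℝ) (hx : x ∈ Set.Icc (0:ℝ) 1) (hnd : ¬ isDyadic x) (hns : ¬ inS x) :
    ∃ δ > 0, ∀ n : ℕ, ∃ J : ℕ, n ≤ J ∧
      δ * (2:ℝ) ^ ((J:ℝ) * (1-α)) < |knoppSlope α x J| ∧
      ((0 < knoppSlope α x J ∧ digit x (J+1) = 0) ∨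
        (knoppSlope α x J < 0 ∧ digit x (J+1) = 1)) := by
  have hx0 : (0:ℝ) ≤ x := hx.1
  have h1α : (0:ℝ) < 1 - α := by linarith
  set r : ℝ := (2:ℝ) ^ ((1:ℝ) - α) with hrdef
  have hr1 : 1 < r := by
    have : (2:ℝ) ^ (0:ℝ) < (2:ℝ) ^ ((1:ℝ) - α) :=
      (Real.rpow_lt_rpow_left_iff (by norm_num)).2 (by linarith)
    simpa using this
  have hr0 : 0 < r := lt_trans one_pos hr1
  set D : ℕ → ℕ := fun j => digit x (j+1) with hDdef
  have hD2 : ∀ j, D j < 2 := fun j => digit_lt_two x (j+1)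
  set ε : ℕ → ℝ := fun j => (-1:ℝ) ^ (D j) with hεdef
  have hεsq : ∀ j, ε j * ε j = 1 := by
    intro j
    simp only [hεdef, ← pow_add, ← two_mul, pow_mul]
    norm_num
  have hεpm : ∀ j, ε j = 1 ∨ ε j = -1 := fun j => neg_one_pow_eq_or ℝ (D j)
  have hpow : ∀ J : ℕ, (2:ℝ) ^ ((J:ℝ) * (1-α)) = r ^ J := by
    intro J
    rw [mul_comm, hrdef, ← Real.rpow_natCast ((2:ℝ)^((1:ℝ)-α)) J,
      ← Real.rpow_mul (by norm_num : (0:ℝ) ≤ 2)]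
  have hks : ∀ J, knoppSlope α x J = ∑ j ∈ Finset.range J, ε j * r ^ j := by
    intro J
    unfold knoppSlope
    refine Finset.sum_congr rfl fun j _ => ?_
    rw [mul_comm ((1:ℝ)-α) (j:ℝ), hpow j]
  have hks_succ : ∀ J, knoppSlope α x (J+1) = knoppSlope α x J + ε J * r ^ J := by
    intro J
    rw [hks, hks, Finset.sum_range_succ]
  set δ : ℝ := (r-1)/(2*(1+r^2)) with hδdef
  have hδ : 0 < δ := by
    apply div_pos (by linarith)
    nlinarith
  have hδkey : δ * (1 + r^2) = (r-1)/2 := by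
    rw [hδdef]
    field_simp [hδdef]
  have hδsmall : δ * (r - 1) < 1 := by
    rw [hδdef]
    rw [div_mul_eq_mul_div, div_lt_one (by nlinarith)]
    nlinarith
  refine ⟨δ, hδ, fun n => ?_⟩
  by_contra hcon
  have fail : ∀ J, n ≤ J → ε J * knoppSlope α x J ≤ δ * r ^ J := by
    intro J hJ
    by_contra hT
    push_neg at hT
    have hrJ : (0:ℝ) < r ^ J := pow_pos hr0 J
    have hpos : 0 < ε J * knoppSlope α x J := lt_trans (by positivity) hT
    have habs : |knoppSlope α x J| = ε J * knoppSlope α x J := by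
      rcases hεpm J with h | h <;> rw [h] at hpos ⊢
      · rw [one_mul] at hpos ⊢; exact abs_of_pos hpos
      · rw [neg_one_mul] at hpos ⊢
        rw [abs_of_neg (by linarith)]
    apply hcon
    refine ⟨J, hJ, by rw [hpow, habs]; exact hT, ?_⟩
    have := hD2 J
    interval_cases h : D J
    · left
      constructor
      · have hε1 : ε J = 1 := by rw [hεdef]; simp [h]
        rw [hε1, one_mul] at hpos; exact hpos
      · exact h
    · right
      constructor
      · have hε1 : ε J = -1 := by rw [hεdef]; simp [h]
        rw [hε1, neg_one_mul] at hpos; linarith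
      · exact h
  by_cases hc1 : ∃ M, n ≤ M ∧ ∀ j, M ≤ j → D (j+1) = D j
  · -- digits eventually constant
    obtain ⟨M, hnM, hconst⟩ := hc1
    have hεc : ∀ j, M ≤ j → ε j = ε M := by
      intro j hj
      induction j, hj using Nat.le_induction with
      | base => rfl
      | succ j hj ih =>
        have : ε (j+1) = ε j := by
          simp only [hεdef]
          rw [hconst j hj]
        rw [this, ih]
    set B := ∑ j ∈ Finset.range M, r ^ j with hBdef
    have hB0 : 0 ≤ B := Finset.sum_nonneg fun j _ => (pow_pos hr0 j).le
    have hSM : |knoppSlope α x M| ≤ B := by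
      rw [hks]
      refine (Finset.abs_sum_le_sum_abs _ _).trans ?_
      refine Finset.sum_le_sum fun j _ => ?_
      rw [abs_mul]
      rcases hεpm j with h|h <;> rw [h] <;>
        simp [abs_of_pos (pow_pos hr0 j)]
    have hlow : -B ≤ ε M * knoppSlope α x M := by
      have h1 : |ε M * knoppSlope α x M| = |knoppSlope α x M| := by
        rcases hεpm M with h|h <;> rw [h] <;> simp
      have h2 := neg_abs_le (ε M * knoppSlope α x M)
      rw [h1] at h2
      linarith
    obtain ⟨J₀, hJ₀⟩ := pow_unbounded_of_one_lt ((1 + 2*B*(r-1))/(1 - δ*(r-1))) hr1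
    set J := max (max M n) J₀ with hJdef
    have hMJ : M ≤ J := le_trans (le_max_left M n) (le_max_left _ _)
    have hnJ : n ≤ J := le_trans (le_max_right M n) (le_max_left _ _)
    have hJ₀J : J₀ ≤ J := le_max_right _ _
    have hSJ : ε M * knoppSlope α x J
        = ε M * knoppSlope α x M + ∑ j ∈ Finset.Ico M J, r ^ j := by
      have hsplit : knoppSlope α x J
          = knoppSlope α x M + ∑ j ∈ Finset.Ico M J, ε j * r ^ j := by
        rw [hks, hks, Finset.sum_range_add_sum_Ico _ hMJ]
      have hIco : ∑ j ∈ Finset.Ico M J, ε j * r ^ j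
          = ε M * ∑ j ∈ Finset.Ico M J, r ^ j := by
        rw [Finset.mul_sum]
        refine Finset.sum_congr rfl fun j hj => ?_
        rw [hεc j (Finset.mem_Ico.1 hj).1]
      rw [hsplit, hIco, mul_add, ← mul_assoc, hεsq M, one_mul]
    have hIcoval : ∑ j ∈ Finset.Ico M J, r ^ j = (r ^ J - 1)/(r-1) - B := by
      rw [Finset.sum_Ico_eq_sub _ hMJ, geom_sum_eq (ne_of_gt hr1), hBdef]
    have hεJ : ε J = ε M := hεc J hMJ
    have hfailJ := fail J hnJ
    rw [hεJ, hSJ, hIcoval] at hfailJ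
    -- hfailJ : εM SM + ((r^J-1)/(r-1) - B) ≤ δ r^J
    set p := r ^ J with hpdef
    have hp : (1 + 2*B*(r-1))/(1 - δ*(r-1)) < p := by
      calc (1 + 2*B*(r-1))/(1 - δ*(r-1)) < r ^ J₀ := hJ₀
        _ ≤ p := pow_le_pow_right₀ hr1.le hJ₀J
    have hden : 0 < 1 - δ*(r-1) := by linarith
    have h2 : 1 + 2*B*(r-1) < p * (1-δ*(r-1)) := (div_lt_iff₀ hden).1 hp
    have h3 : (p - 1)/(r-1) ≤ δ * p + 2*B := by linarith
    have h4 : p - 1 ≤ (δ * p + 2*B)*(r-1) := (div_le_iff₀ (by linarith)).1 h3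
    nlinarith
  · by_cases hc2 : ∃ M, n ≤ M ∧ ∀ j, M ≤ j → D (j+1) = 1 - D j
    · -- digits eventually alternating : x ∈ S
      obtain ⟨M, hnM, halt⟩ := hc2
      exfalso
      apply hns
      set d := D M with hddef
      have hd1 : d ≤ 1 := by have := hD2 M; omega
      set c : ℝ := ((d:ℝ)+1)/3 with hcdef
      set f := Int.fract ((2:ℝ)^M * x) with hfdef
      have main : ∀ k : ℕ, Int.fract ((2:ℝ)^(M+2*k) * x) - c = 4^k * (f - c)
          ∧ digit x (M+2*k+1) = d := by
        intro k
        induction k with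
        | zero => exact ⟨by norm_num [hfdef], rfl⟩
        | succ k ih =>
          obtain ⟨ih1, ih2⟩ := ih
          have e1 : Int.fract ((2:ℝ)^(M+2*k+1) * x)
              = 2 * Int.fract ((2:ℝ)^(M+2*k) * x) - (d:ℝ) := by
            rw [fract_succ x hx0 (M+2*k), ih2]
          have hd2 : digit x (M+2*k+2) = 1 - d := by
            have h := halt (M+2*k) (by omega)
            simp only [hDdef] at h
            rw [show M+2*k+1+1 = M+2*k+2 by ring] at h
            rw [h, ih2]
          have e2 : Int.fract ((2:ℝ)^(M+2*k+2) * x)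
              = 4 * Int.fract ((2:ℝ)^(M+2*k) * x) - (d:ℝ) - 1 := by
            rw [show M+2*k+2 = (M+2*k+1)+1 by ring, fract_succ x hx0 (M+2*k+1), e1,
              show (M+2*k+1)+1 = M+2*k+2 by ring, hd2, Nat.cast_sub hd1]
            push_cast
            ring
          constructor
          · rw [show M+2*(k+1) = M+2*k+2 by ring, e2]
            have h4 : (4:ℝ)^(k+1) = 4 * 4^k := by ring
            rw [h4]
            have hc3 : 3 * c = (d:ℝ) + 1 := by rw [hcdef]; ring
            nlinarith [ih1]
          · have h := halt (M+2*k+1) (by omega)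
            simp only [hDdef] at h
            rw [show M+2*k+1+1 = M+2*k+2 by ring] at h
            rw [show M+2*(k+1)+1 = M+2*k+1+1+1 by ring, h, hd2]
            omega
      have hfc : f = c := by
        by_contra hne
        have habs : 0 < |f - c| := abs_pos.2 (sub_ne_zero.2 hne)
        obtain ⟨k, hk⟩ := pow_unbounded_of_one_lt (2/|f-c|) (by norm_num : (1:ℝ) < 4)
        have h1 : 2 < 4^k * |f - c| := by
          rw [div_lt_iff₀ habs] at hk; linarith
        have h2 := (main k).1
        have hg0 : (0:ℝ) ≤ Int.fract ((2:ℝ)^(M+2*k) * x) := Int.fract_nonneg _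
        have hg1 : Int.fract ((2:ℝ)^(M+2*k) * x) < 1 := Int.fract_lt_one _
        have hc0 : 0 < c := by rw [hcdef]; positivity
        have hc1 : c ≤ 1 := by
          rw [hcdef]
          have : (d:ℝ) ≤ 1 := by exact_mod_cast hd1
          linarith
        have h3 : |Int.fract ((2:ℝ)^(M+2*k) * x) - c| < 2 := by
          rw [abs_lt]; constructor <;> linarith
        have h5 : |Int.fract ((2:ℝ)^(M+2*k) * x) - c| = 4^k * |f - c| := by
          rw [h2, abs_mul, abs_of_pos (by positivity : (0:ℝ) < (4:ℝ)^k)]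
        linarith [h5 ▸ h3]
      have hfloor0 : (0:ℤ) ≤ ⌊(2:ℝ)^M * x⌋ := Int.floor_nonneg.2 (by positivity)
      set m : ℕ := (⌊(2:ℝ)^M * x⌋).toNat with hmdef
      have hmc : (m:ℝ) = ((⌊(2:ℝ)^M * x⌋ : ℤ) : ℝ) := by
        rw [hmdef]
        exact_mod_cast congrArg (fun z : ℤ => (z:ℝ)) (Int.toNat_of_nonneg hfloor0)
      have hxeq : (2:ℝ)^M * x = (m:ℝ) + c := by
        rw [hmc, ← hfc, hfdef]
        exact (Int.floor_add_fract _).symm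
      have hp2 : (0:ℝ) < 2^M := by positivity
      have hxval : x = ((m:ℝ) + c)/2^M := by
        field_simp
        linarith [hxeq]
      have hc0 : 0 < c := by rw [hcdef]; positivity
      constructor
      · refine ⟨m, M, ?_⟩
        have hd01 : d = 0 ∨ d = 1 := by omega
        rcases hd01 with h|h
        · left; rw [hxval, hcdef, h]; push_cast; field_simp; ring
        · right; rw [hxval, hcdef, h]; push_cast; field_simp; ring
      · constructor
        · rw [hxval]
          apply div_pos _ hp2
          have hmn : (0:ℝ) ≤ (m:ℝ) := Nat.cast_nonneg m
          linarith
        · rcases lt_or_eq_of_le hx.2 with h|h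
          · exact h
          · exfalso
            have : Int.fract ((2:ℝ)^M * x) = 0 := by
              rw [h, mul_one]
              have h2 : ((2:ℝ)^M) = ((2^M : ℤ) : ℝ) := by push_cast; ring
              rw [h2, Int.fract_intCast]
            rw [← hfdef, hfc] at this
            linarith
    · -- infinitely many alternations and repeats
      push_neg at hc1 hc2
      obtain ⟨a, hna, ha⟩ := hc1 n le_rfl
      have hrep : ∃ j, a + 1 ≤ j ∧ D (j+1) = D j := by
        obtain ⟨j, hj, hjne⟩ := hc2 (a+1) (by omega)
        refine ⟨j, hj, ?_⟩
        have h1 := hD2 j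
        have h2 := hD2 (j+1)
        omega
      obtain ⟨Jv, hJv1, hJvmin⟩ : ∃ Jv, (a + 1 ≤ Jv ∧ D (Jv+1) = D Jv) ∧
          ∀ j, j < Jv → ¬(a + 1 ≤ j ∧ D (j+1) = D j) :=
        ⟨Nat.find hrep, Nat.find_spec hrep, fun j hj => Nat.find_min hrep hj⟩
      obtain ⟨m, rfl⟩ : ∃ m, Jv = m + 1 := ⟨Jv - 1, by omega⟩
      have ham : a ≤ m := by omega
      have hrep2 : D (m+2) = D (m+1) := by
        have := hJv1.2
        rwa [show m+1+1 = m+2 by omega] at this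
      have hnea : D (m+1) ≠ D m := by
        rcases Nat.lt_or_ge a m with h|h
        · have hmin := hJvmin m (by omega)
          push_neg at hmin
          exact hmin (by omega)
        · have ham2 : m = a := by omega
          rw [ham2]
          exact ha
      have hnm : n ≤ m := le_trans hna ham
      have hεalt : ε (m+1) = -ε m := neg_one_pow_ne (hD2 m) (hD2 (m+1)) (Ne.symm hnea)
      have hεrep : ε (m+2) = ε (m+1) := by
        simp only [hεdef]
        rw [hrep2]
      have F0 := fail m hnm
      have F2 := fail (m+2) (by omega)
      have E1 := hks_succ m
      have E2 := hks_succ (m+1)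
      have key : ε (m+2) * knoppSlope α x (m+2)
          = -(ε m * knoppSlope α x m) - r^m + r^(m+1) := by
        rw [hεrep, E2, E1, hεalt]
        linear_combination (r^(m+1) - r^m) * hεsq m
      rw [key] at F2
      have hpm : (0:ℝ) < r ^ m := pow_pos hr0 m
      have hr2 : r^(m+1) = r * r^m := by ring
      have hr3 : r^(m+2) = r * r * r^m := by ring
      rw [hr2] at F2
      rw [hr3] at F2
      -- F0 : ε m * S m ≤ δ * r^m ; F2 : -(ε m * S m) - r^m + r*r^m ≤ δ*(r*r*r^m)
      nlinarith [hδkey]
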